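/- Let the additive group $\mathbb{R}^n$ act smoothly and transitively on a connected manifold $M$ of dimension $n$ such that the infinitesimal generators are linearly independent at every point. Then the isotropy group $K$ of any point is a discrete subgroup of $\mathbb{R}^n$, hence isomorphic to $\mathbb{Z}^m$ for some $0 \le m \le n$, and $M$ is diffeomorphic to $\mathbb{R}^n / K \cong \mathbb{R}^{n-m} \times T^m$. -/

import Mathlib

open scoped Manifold

open Set Function Submodule Module in
private theorem stmt4_loc (n : ℕ) {M : Type*} [TopologicalSpace M]
    [ChartedSpace (EuclideanSpace ℝ (Fin n)) M]
    [IsManifold (𝓡 n) (⊤ : ℕ∞) M]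
    (θ : (Fin n → ℝ) → M)
    (hsm : ContMDiff 𝓘(ℝ, Fin n → ℝ) (𝓡 n) (⊤ : ℕ∞) θ)
    (hf : Function.Injective (mfderiv 𝓘(ℝ, Fin n → ℝ) (𝓡 n) θ 0)) :
    ∃ U : Set (Fin n → ℝ), IsOpen U ∧ 0 ∈ U ∧ Set.InjOn θ U ∧
      ∀ V ⊆ U, IsOpen V → IsOpen (θ '' V) := by
  set y := θ 0 with hy
  have hysrc : y ∈ (chartAt (EuclideanSpace ℝ (Fin n)) y).source := mem_chart_source _ y
  set c := chartAt (EuclideanSpace ℝ (Fin n)) y with hc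
  set g : (Fin n → ℝ) → EuclideanSpace ℝ (Fin n) := fun s => extChartAt (𝓡 n) y (θ s) with hg
  have hgc : g = fun s => c (θ s) := by
    funext s; simp [hg, hc, extChartAt_coe, Function.comp]
  have hθc : Continuous θ := hsm.continuous
  -- smoothness of g
  have h1 : ContMDiffAt 𝓘(ℝ, Fin n → ℝ) 𝓘(ℝ, EuclideanSpace ℝ (Fin n)) (⊤ : ℕ∞) g 0 := by
    have h2 : ContMDiffAt (𝓡 n) 𝓘(ℝ, EuclideanSpace ℝ (Fin n)) (⊤ : ℕ∞) (extChartAt (𝓡 n) y) y :=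
      contMDiffAt_extChartAt
    exact h2.comp 0 (hsm 0)
  have hgsm := h1.contDiffAt
  -- derivative of g
  have hmd_ec : MDifferentiableAt (𝓡 n) 𝓘(ℝ, EuclideanSpace ℝ (Fin n)) (extChartAt (𝓡 n) y) y :=
    mdifferentiableAt_extChartAt hysrc
  have hmdθ : MDifferentiableAt 𝓘(ℝ, Fin n → ℝ) (𝓡 n) θ 0 := (hsm 0).mdifferentiableAt (by simp)
  have hcomp : mfderiv 𝓘(ℝ, Fin n → ℝ) 𝓘(ℝ, EuclideanSpace ℝ (Fin n)) g 0
      = (mfderiv (𝓡 n) 𝓘(ℝ, EuclideanSpace ℝ (Fin n)) (extChartAt (𝓡 n) y) y).comp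
        (mfderiv 𝓘(ℝ, Fin n → ℝ) (𝓡 n) θ 0) := by
    exact mfderiv_comp 0 hmd_ec hmdθ
  have hecinj : Function.Injective
      (mfderiv (𝓡 n) 𝓘(ℝ, EuclideanSpace ℝ (Fin n)) (extChartAt (𝓡 n) y) y) := by
    have h := mfderivWithin_extChartAt_symm_comp_mfderiv_extChartAt'
      (I := 𝓡 n) (x := y) (y := y) (by simpa [extChartAt_source] using hysrc)
    intro a b hab
    have ha' := DFunLike.congr_fun h a
    have hb' := DFunLike.congr_fun h b
    rw [ContinuousLinearMap.comp_apply, hab] at ha'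
    rw [ContinuousLinearMap.comp_apply] at hb'
    exact ha'.symm.trans hb'
  have dinj : Function.Injective (fderiv ℝ g 0) := by
    rw [← mfderiv_eq_fderiv, hcomp]
    exact fun a b hab => hf (hecinj hab)
  -- build the continuous linear equiv
  haveI : FiniteDimensional ℝ (Fin n → ℝ) := inferInstance
  set d := fderiv ℝ g 0 with hd
  have hrk : Module.finrank ℝ (Fin n → ℝ) = Module.finrank ℝ (EuclideanSpace ℝ (Fin n)) := by
    rw [Module.finrank_fin_fun, finrank_euclideanSpace_fin]
  set ld := LinearMap.linearEquivOfInjective (d : (Fin n → ℝ) →ₗ[ℝ] EuclideanSpace ℝ (Fin n))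
    dinj hrk with hld
  set de := ld.toContinuousLinearEquiv with hde
  have hdeq : (de : (Fin n → ℝ) →L[ℝ] EuclideanSpace ℝ (Fin n)) = d := by
    ext v
    simp [hde, hld, LinearMap.linearEquivOfInjective_apply]
  have hstrict : HasStrictFDerivAt g
      (de : (Fin n → ℝ) →L[ℝ] EuclideanSpace ℝ (Fin n)) 0 := by
    rw [hdeq]
    exact hgsm.hasStrictFDerivAt (by simp)
  set ph := hstrict.toOpenPartialHomeomorph g with hph
  have hmem : (0 : Fin n → ℝ) ∈ ph.source := hstrict.mem_toOpenPartialHomeomorph_source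
  have hphcoe : (ph : (Fin n → ℝ) → EuclideanSpace ℝ (Fin n)) = g :=
    hstrict.toOpenPartialHomeomorph_coe
  -- the good neighbourhood
  refine ⟨ph.source ∩ θ ⁻¹' c.source, ph.open_source.inter (c.open_source.preimage hθc),
    ⟨hmem, by simpa [hy] using hysrc⟩, ?_, ?_⟩
  · intro a ha b hb hab
    have : g a = g b := by rw [hgc]; simp [hab]
    have h1 : ph a = ph b := by rw [hphcoe]; exact this
    exact ph.injOn ha.1 hb.1 h1
  · intro V hVsub hVopen
    have himg : θ '' V = c.symm '' (g '' V) := by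
      ext z
      constructor
      · rintro ⟨v, hv, rfl⟩
        exact ⟨g v, ⟨v, hv, rfl⟩, by rw [hgc]; exact c.left_inv (hVsub hv).2⟩
      · rintro ⟨w, ⟨v, hv, rfl⟩, rfl⟩
        refine ⟨v, hv, ?_⟩
        rw [hgc]
        exact (c.left_inv (hVsub hv).2).symm
    rw [himg]
    have hgopen : IsOpen (g '' V) := by
      rw [← hphcoe]
      exact ph.isOpen_image_of_subset_source hVopen (fun v hv => (hVsub hv).1)
    have hgsubtgt : g '' V ⊆ c.target := by
      rintro w ⟨v, hv, rfl⟩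
      rw [hgc]
      exact c.map_source (hVsub hv).2
    exact c.symm.isOpen_image_of_subset_source hgopen (by rwa [c.symm_source])


open Set Submodule Module in
set_option maxHeartbeats 1000000 in
private theorem stmt4_lattice_struct (n : ℕ) (K : AddSubgroup (Fin n → ℝ)) (hd : DiscreteTopology K) :
    ∃ (m : ℕ), m ≤ n ∧ Nonempty (K ≃+ (Fin m → ℤ)) ∧
    ∃ (e : ((Fin (n - m) → ℝ) × (Fin m → ℝ)) ≃L[ℝ] (Fin n → ℝ)),
      ∀ u v, e (u, v) ∈ K ↔ u = 0 ∧ ∀ i, ∃ z : ℤ, v i = (z : ℝ) := by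
  classical
  set E := Fin n → ℝ
  set L : Submodule ℤ E := AddSubgroup.toIntSubmodule K with hL
  have hLK : (L : Set E) = (K : Set E) := AddSubgroup.coe_toIntSubmodule K
  haveI hdL : DiscreteTopology L := hd
  set V : Submodule ℝ E := span ℝ (L : Set E) with hV
  set f : V →ₗ[ℝ] E := V.subtype with hf
  set L₀ : Submodule ℤ V := L.comap (f.restrictScalars ℤ) with hL₀
  have hmemL₀ : ∀ x : V, x ∈ L₀ ↔ (x : E) ∈ K := by
    intro x
    rw [hL₀, Submodule.mem_comap]
    constructor
    · intro h; rw [← SetLike.mem_coe, ← hLK]; exact h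
    · intro h; have : (x : E) ∈ (L : Set E) := by rw [hLK]; exact h
      exact this
  haveI hdL₀ : DiscreteTopology L₀ := by
    refine DiscreteTopology.preimage_of_continuous_injective (L : Set E) ?_ (injective_subtype _)
    exact LinearMap.continuous_of_finiteDimensional f
  haveI hzl : IsZLattice ℝ L₀ := ⟨by
    have h_img : f '' L₀ = L := by
      rw [← LinearMap.coe_restrictScalars ℤ f, ← Submodule.map_coe (f.restrictScalars ℤ),
        Submodule.map_comap_eq_self]
      exact fun x hx ↦ LinearMap.mem_range.mpr ⟨⟨x, Submodule.subset_span hx⟩, rfl⟩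
    rw [← (Submodule.map_injective_of_injective (injective_subtype V)).eq_iff, Submodule.map_span,
      Submodule.map_top, range_subtype, h_img]⟩
  haveI : Module.Finite ℤ L₀ := ZLattice.module_finite ℝ L₀
  haveI : Module.Free ℤ L₀ := ZLattice.module_free ℝ L₀
  set m := finrank ℝ V with hm
  have hrank : finrank ℤ L₀ = m := ZLattice.rank ℝ L₀
  have hmn : m ≤ n := by
    have := Submodule.finrank_le V
    rwa [Module.finrank_fin_fun] at this
  -- ℤ-basis of L₀ indexed by Fin m
  have hcard : Fintype.card (Module.Free.ChooseBasisIndex ℤ L₀) = m := by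
    rw [← Module.finrank_eq_card_chooseBasisIndex, hrank]
  set b₀ : Basis (Fin m) ℤ L₀ :=
    (Module.Free.chooseBasis ℤ L₀).reindex (Fintype.equivFinOfCardEq hcard) with hb₀
  -- K ≃+ (Fin m → ℤ)
  have e1 : K ≃+ L₀ :=
    { toFun := fun k => ⟨⟨(k : E), Submodule.subset_span (hLK ▸ k.2)⟩, by
        rw [hmemL₀]; exact k.2⟩
      invFun := fun l => ⟨((l : V) : E), (hmemL₀ _).mp l.2⟩
      left_inv := fun k => rfl
      right_inv := fun l => rfl
      map_add' := fun a b => rfl }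
  have e2 : L₀ ≃ₗ[ℤ] (Fin m → ℤ) := b₀.equivFun
  refine ⟨m, hmn, ⟨e1.trans e2.toAddEquiv⟩, ?_⟩
  -- real basis of V coming from the lattice basis
  set bV : Basis (Fin m) ℝ V := b₀.ofZLatticeBasis ℝ L₀ with hbV
  obtain ⟨W, hW⟩ := Submodule.exists_isCompl V
  have hWrank : finrank ℝ W = n - m := by
    have h2 := Submodule.finrank_add_eq_of_isCompl hW
    rw [Module.finrank_fin_fun] at h2
    omega
  set bW : Basis (Fin (n - m)) ℝ W := (Module.finBasis ℝ W).reindex (finCongr hWrank) with hbW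
  set eL : ((Fin (n - m) → ℝ) × (Fin m → ℝ)) ≃ₗ[ℝ] E :=
    (bW.equivFun.symm.prodCongr bV.equivFun.symm).trans (Submodule.prodEquivOfIsCompl W V hW.symm)
    with heL
  have heLapp : ∀ u v, eL (u, v) = ((bW.equivFun.symm u : E) + (bV.equivFun.symm v : E)) := by
    intro u v
    simp [heL, Submodule.coe_prodEquivOfIsCompl', LinearEquiv.prodCongr_apply]
  refine ⟨eL.toContinuousLinearEquiv, ?_⟩
  intro u v
  have happ : (eL.toContinuousLinearEquiv (u, v) : E) = eL (u, v) := rfl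
  rw [happ, heLapp]
  constructor
  · intro hk
    -- the element lies in K ⊆ V, so the W-part vanishes
    have hkV : ((bW.equivFun.symm u : E) + (bV.equivFun.symm v : E)) ∈ V := by
      apply Submodule.subset_span
      rw [hLK]
      exact hk
    have hwV : (bW.equivFun.symm u : E) ∈ V := by
      have : (bW.equivFun.symm u : E)
          = ((bW.equivFun.symm u : E) + (bV.equivFun.symm v : E)) - (bV.equivFun.symm v : E) := by
        ring
      rw [this]
      exact Submodule.sub_mem V hkV (bV.equivFun.symm v).2
    have hw0 : (bW.equivFun.symm u : E) = 0 := by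
      have hdis := hW.disjoint
      exact (Submodule.disjoint_def.mp hdis) _ hwV (bW.equivFun.symm u).2
    have hu : u = 0 := by
      have h1 : bW.equivFun.symm u = 0 := Subtype.coe_injective (by simpa using hw0)
      have h2 : bW.equivFun.symm u = bW.equivFun.symm 0 := by simpa using h1
      exact bW.equivFun.symm.injective h2
    refine ⟨hu, ?_⟩
    -- now the element equals the V-part and lies in L₀
    have hkeq : ((bW.equivFun.symm u : E) + (bV.equivFun.symm v : E)) = (bV.equivFun.symm v : E) := by
      rw [hw0, zero_add]
    set l : L₀ := ⟨bV.equivFun.symm v, by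
      rw [hmemL₀]; rw [← hkeq]; exact hk⟩ with hl
    intro i
    refine ⟨b₀.repr l i, ?_⟩
    have h3 : bV.repr (l : V) i = ((b₀.repr l i : ℤ) : ℝ) :=
      Basis.ofZLatticeBasis_repr_apply ℝ L₀ b₀ l i
    have h4 : bV.repr (bV.equivFun.symm v) i = v i := by
      have h5 := bV.equivFun.apply_symm_apply v
      rw [Basis.equivFun_apply] at h5
      exact congrFun h5 i
    rw [← h4]
    rw [show (l : V) = bV.equivFun.symm v from rfl] at h3
    rw [h3]
  · rintro ⟨rfl, hv⟩
    choose z hz using hv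
    have h0 : (bW.equivFun.symm (0 : Fin (n-m) → ℝ) : E) = 0 := by simp
    rw [h0, zero_add]
    have : bV.equivFun.symm v = ∑ i, v i • bV i := by
      simp [Basis.equivFun_symm_apply]
    rw [this]
    have hcoe : ((∑ i, v i • bV i : V) : E) = ∑ i, v i • (bV i : E) := by
      push_cast
      rfl
    rw [hcoe]
    apply AddSubgroup.sum_mem
    intro i _
    have hbiK : (bV i : E) ∈ K := by
      have : bV i = (b₀ i : V) := Basis.ofZLatticeBasis_apply ℝ L₀ b₀ i
      rw [this]
      exact (hmemL₀ _).mp (b₀ i).2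
    have : v i • (bV i : E) = z i • (bV i : E) := by
      rw [hz i, Int.cast_smul_eq_zsmul]
    rw [this]
    exact AddSubgroup.zsmul_mem K hbiK (z i)


open Set Function in
private theorem stmt4_quot_homeo {n nm m : ℕ} {M : Type*} [TopologicalSpace M]
    (θ : (Fin n → ℝ) → M) (hc : Continuous θ) (hsurj : Function.Surjective θ)
    (hopen : IsOpenMap θ) (K : AddSubgroup (Fin n → ℝ))
    (hK : ∀ a b, θ a = θ b ↔ a - b ∈ K)
    (e : ((Fin nm → ℝ) × (Fin m → ℝ)) ≃L[ℝ] (Fin n → ℝ))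
    (he : ∀ u v, e (u, v) ∈ K ↔ u = 0 ∧ ∀ i, ∃ z : ℤ, v i = (z : ℝ)) :
    Nonempty (M ≃ₜ ((Fin nm → ℝ) × (Fin m → AddCircle (1 : ℝ)))) := by
  set ψ : (Fin nm → ℝ) × (Fin m → ℝ) → M := fun p => θ (e p) with hψ
  have hψc : Continuous ψ := hc.comp e.continuous
  have hψopen : IsOpenMap ψ := hopen.comp e.toHomeomorph.isOpenMap
  have hψsurj : Surjective ψ := fun y => by
    obtain ⟨s, hs⟩ := hsurj y
    exact ⟨e.symm s, by simp [hψ, hs]⟩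
  set q : (Fin nm → ℝ) × (Fin m → ℝ) → (Fin nm → ℝ) × (Fin m → AddCircle (1 : ℝ)) :=
    Prod.map id (Pi.map fun _ (r : ℝ) => (r : AddCircle (1 : ℝ))) with hq
  have hqoq : IsOpenQuotientMap q :=
    IsOpenQuotientMap.id.prodMap
      (IsOpenQuotientMap.piMap fun _ => QuotientAddGroup.isOpenQuotientMap_mk)
  -- key fiber relation
  have hrel : ∀ p p', ψ p = ψ p' ↔ q p = q p' := by
    intro p p'
    rw [hψ]
    simp only
    rw [hK]
    have hsub : e p - e p' = e (p - p') := (map_sub e p p').symm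
    rw [hsub]
    have : p - p' = (p.1 - p'.1, p.2 - p'.2) := rfl
    rw [this, he]
    constructor
    · rintro ⟨h1, h2⟩
      have h1' : p.1 = p'.1 := sub_eq_zero.mp h1
      refine Prod.ext (by simpa [hq] using h1') ?_
      funext i
      obtain ⟨z, hz⟩ := h2 i
      have : p.2 i - p'.2 i = (z : ℝ) := hz
      simp only [hq, Prod.map_snd, Pi.map_apply]
      rw [show p.2 i = p'.2 i + (z : ℝ) by linarith [this]]
      rw [QuotientAddGroup.eq_iff_sub_mem]
      exact AddSubgroup.mem_zmultiples_iff.mpr ⟨z, by rw [zsmul_eq_mul]; push_cast; ring⟩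
    · intro h
      obtain ⟨h1, h2'⟩ := Prod.ext_iff.mp h
      simp only [hq, Prod.map_fst, id_eq] at h1
      have h2 : ∀ i, ((p.2 i : ℝ) : AddCircle (1:ℝ)) = ((p'.2 i : ℝ) : AddCircle (1:ℝ)) := by
        intro i
        simpa [hq] using congrFun h2' i
      refine ⟨sub_eq_zero.mpr h1, fun i => ?_⟩
      have h3 := (QuotientAddGroup.eq_iff_sub_mem).mp (h2 i)
      obtain ⟨z, hz⟩ := (AddSubgroup.mem_zmultiples_iff).mp h3
      exact ⟨z, by simpa using hz.symm⟩
  -- representative map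
  set F : (Fin nm → ℝ) × (Fin m → AddCircle (1 : ℝ)) → M :=
    fun w => ψ (w.1, fun i => (w.2 i).out) with hF
  have hqsec : ∀ w : (Fin nm → ℝ) × (Fin m → AddCircle (1 : ℝ)),
      q (w.1, fun i => (w.2 i).out) = w := by
    intro w
    refine Prod.ext rfl ?_
    funext i
    simpa [hq] using QuotientAddGroup.out_eq (w.2 i)
  have hFq : ∀ p, F (q p) = ψ p := by
    intro p
    rw [hF]
    simp only
    apply (hrel _ _).mpr
    rw [hqsec (q p)]
  have hqsurj : Surjective q := hqoq.surjective
  have hFsurj : Surjective F := by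
    intro y
    obtain ⟨p, hp⟩ := hψsurj y
    exact ⟨q p, by rw [hFq]; exact hp⟩
  have hFinj : Injective F := by
    intro w w' hww
    have h1 : F (q (w.1, fun i => (w.2 i).out)) = F (q (w'.1, fun i => (w'.2 i).out)) := by
      rw [hqsec w, hqsec w']; exact hww
    rw [hFq, hFq] at h1
    have := (hrel _ _).mp h1
    rw [hqsec w, hqsec w'] at this
    exact this
  have hFcont : Continuous F := by
    rw [← hqoq.continuous_comp_iff]
    have : F ∘ q = ψ := funext hFq
    rw [this]
    exact hψc
  have hFopen : IsOpenMap F := by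
    intro O hO
    have himg : F '' O = ψ '' (q ⁻¹' O) := by
      ext z
      constructor
      · rintro ⟨w, hw, rfl⟩
        obtain ⟨p, rfl⟩ := hqsurj w
        exact ⟨p, hw, (hFq p).symm⟩
      · rintro ⟨p, hp, rfl⟩
        exact ⟨q p, hp, hFq p⟩
    rw [himg]
    exact hψopen _ (hO.preimage hqoq.continuous)
  exact ⟨(Equiv.toHomeomorphOfContinuousOpen (Equiv.ofBijective F ⟨hFinj, hFsurj⟩)
    hFcont hFopen).symm⟩


/-- Let the additive group `ℝⁿ` act smoothly and transitively on a connected smooth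
`n`-manifold `M` with infinitesimal generators linearly independent at every point
(i.e. the orbit maps are immersive at `0`).  Then the isotropy group of any point is a
discrete subgroup of `ℝⁿ`, hence isomorphic to `ℤᵐ` for some `0 ≤ m ≤ n`, and `M` is
diffeomorphic (here: homeomorphic, via the smooth orbit map structure) to
`ℝ^{n-m} × Tᵐ`. -/
theorem stmt_4 (n : ℕ) {M : Type*} [TopologicalSpace M]
    [ChartedSpace (EuclideanSpace ℝ (Fin n)) M]
    [IsManifold (𝓡 n) (⊤ : ℕ∞) M] [ConnectedSpace M] [Nonempty M]
    (Φ : (Fin n → ℝ) → M → M)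
    (hzero : ∀ x, Φ 0 x = x)
    (hadd : ∀ s t x, Φ (s + t) x = Φ s (Φ t x))
    (hsmooth : ContMDiff ((𝓘(ℝ, Fin n → ℝ)).prod (𝓡 n)) (𝓡 n) (⊤ : ℕ∞)
      fun p : (Fin n → ℝ) × M => Φ p.1 p.2)
    (htrans : ∀ x y : M, ∃ s, Φ s x = y)
    -- the infinitesimal generators are linearly independent at every point:
    -- each orbit map is immersive at `0`
    (hfree : ∀ x : M, Function.Injective
      (mfderiv 𝓘(ℝ, Fin n → ℝ) (𝓡 n) (fun s => Φ s x) 0)) :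
    ∀ x : M, ∃ (K : AddSubgroup (Fin n → ℝ)) (m : ℕ),
      m ≤ n ∧
      (K : Set (Fin n → ℝ)) = {s | Φ s x = x} ∧
      DiscreteTopology K ∧
      Nonempty (K ≃+ (Fin m → ℤ)) ∧
      Nonempty (M ≃ₜ ((Fin (n - m) → ℝ) × (Fin m → AddCircle (1 : ℝ)))) := by
  intro x
  set θ : (Fin n → ℝ) → M := fun s => Φ s x with hθ
  set K : AddSubgroup (Fin n → ℝ) :=
    { carrier := {s | Φ s x = x}
      zero_mem' := hzero x
      add_mem' := by
        intro a b ha hb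
        simp only [Set.mem_setOf_eq] at *
        rw [hadd, hb, ha]
      neg_mem' := by
        intro a ha
        simp only [Set.mem_setOf_eq] at *
        have h1 : Φ (-a) (Φ a x) = x := by
          rw [← hadd]; simp [hzero]
        rwa [ha] at h1 } with hKdef
  have hrel : ∀ a b, θ a = θ b ↔ a - b ∈ K := by
    intro a b
    constructor
    · intro h
      have h' : Φ a x = Φ b x := h
      have : Φ (a - b) x = x := by
        rw [show a - b = -b + a by abel, hadd, h', ← hadd]
        simp [hzero]
      exact this
    · intro h
      have hx : Φ (a - b) x = x := h
      show Φ a x = Φ b x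
      rw [show a = b + (a - b) by abel, hadd, hx]
  have hsm_y : ∀ y : M, ContMDiff 𝓘(ℝ, Fin n → ℝ) (𝓡 n) (⊤ : ℕ∞) (fun s => Φ s y) := by
    intro y
    exact hsmooth.comp (contMDiff_id.prodMk contMDiff_const)
  have hc : Continuous θ := (hsm_y x).continuous
  have hsurj : Function.Surjective θ := fun y => htrans x y
  have hopen : IsOpenMap θ := by
    intro O hO
    rw [isOpen_iff_forall_mem_open]
    rintro z ⟨s, hs, rfl⟩
    obtain ⟨U, hUo, hU0, hUinj, hUim⟩ :=
      stmt4_loc n (fun t => Φ t (Φ s x)) (hsm_y (Φ s x)) (hfree (Φ s x))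
    set V := U ∩ {t | s + t ∈ O} with hV
    have hVo : IsOpen V := hUo.inter (hO.preimage (continuous_const.add continuous_id))
    refine ⟨(fun t => Φ t (Φ s x)) '' V, ?_, hUim V Set.inter_subset_left hVo, ?_⟩
    · rintro _ ⟨t, ⟨_, htO⟩, rfl⟩
      refine ⟨s + t, htO, ?_⟩
      show Φ (s + t) x = Φ t (Φ s x)
      rw [show s + t = t + s by abel, hadd]
    · exact ⟨0, ⟨hU0, by simpa using hs⟩, by simp [hzero, hθ]⟩
  obtain ⟨U, hUo, hU0, hUinj, _⟩ := stmt4_loc n θ (hsm_y x) (hfree x)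
  have hdisc : DiscreteTopology K := by
    rw [discreteTopology_iff_isOpen_singleton]
    rintro ⟨k, hk⟩
    have hset : ({⟨k, hk⟩} : Set K) = Subtype.val ⁻¹' ((fun t => k + t) '' U) := by
      ext ⟨k', hk'⟩
      simp only [Set.mem_singleton_iff, Set.mem_preimage]
      constructor
      · intro hkk
        have hk'k : k' = k := by simpa using congrArg Subtype.val hkk
        subst hk'k
        exact ⟨0, hU0, by simp⟩
      · rintro ⟨u, hu, huk⟩
        have hukk : u = k' - k := by
          have : (k : Fin n → ℝ) + u = k' := huk
          rw [← this]; abel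
        have huK : u - 0 ∈ K := by
          rw [hukk]
          simpa using K.sub_mem hk' hk
        have hθu : θ u = θ 0 := (hrel u 0).mpr huK
        have := hUinj hu hU0 hθu
        apply Subtype.ext
        show k' = k
        rw [← huk, this]
        simp
    rw [hset]
    exact ((Homeomorph.addLeft k).isOpenMap U hUo).preimage continuous_subtype_val
  obtain ⟨m, hmn, heqK, e, he⟩ := stmt4_lattice_struct n K hdisc
  exact ⟨K, m, hmn, rfl, hdisc, heqK, stmt4_quot_homeo θ hc hsurj hopen K hrel e he⟩
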